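/- Let T be an (α,β)-normal operator on a complex Hilbert space, where 0 ≤ α ≤ 1 ≤ β. Then w(T)² ≥ max{1 + α², 1 + 1/β²}·‖T‖²/4 + |‖Re(T) + Im(T)‖² − ‖Re(T) − Im(T)‖²|/4. -/

import Mathlib

variable {H : Type*} [NormedAddCommGroup H] [InnerProductSpace ℂ H] [CompleteSpace H]

/-- The numerical radius of a bounded linear operator. -/
noncomputable def numRad (T : H →L[ℂ] H) : ℝ :=
  sSup {r : ℝ | ∃ x : H, ‖x‖ = 1 ∧ r = ‖(inner ℂ (T x) x : ℂ)‖}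

/-- The α-norm of a bounded linear operator. -/
noncomputable def alphaNorm (α : ℝ) (T : H →L[ℂ] H) : ℝ :=
  sSup {r : ℝ | ∃ x : H, ‖x‖ = 1 ∧
    r = Real.sqrt (α * (‖(inner ℂ (T x) x : ℂ)‖)^2 + (1 - α) * ‖T x‖^2)}

/-- `|T| = (T* T)^(1/2)`. -/
noncomputable def absOp (T : H →L[ℂ] H) : H →L[ℂ] H :=
  CFC.sqrt (ContinuousLinearMap.adjoint T * T)

/-- `|T*| = (T T*)^(1/2)`. -/
noncomputable def absAdj (T : H →L[ℂ] H) : H →L[ℂ] H :=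
  CFC.sqrt (T * ContinuousLinearMap.adjoint T)

/-- The real part `(A + A*)/2`. -/
noncomputable def reOp (A : H →L[ℂ] H) : H →L[ℂ] H :=
  (2:ℝ)⁻¹ • (A + ContinuousLinearMap.adjoint A)

/-- The imaginary part `(A - A*)/(2i)`. -/
noncomputable def imOp (A : H →L[ℂ] H) : H →L[ℂ] H :=
  ((2 * Complex.I)⁻¹ : ℂ) • (A - ContinuousLinearMap.adjoint A)

open ContinuousLinearMap

lemma my_smul_nonneg_op (c : ℝ) (hc : 0 ≤ c) {P : H →L[ℂ] H} (hP : 0 ≤ P) : 0 ≤ c • P := by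
  rw [ContinuousLinearMap.nonneg_iff_isPositive, ContinuousLinearMap.isPositive_def'] at hP ⊢
  refine ⟨?_, fun x => ?_⟩
  · rw [isSelfAdjoint_iff, star_smul, star_trivial, hP.1.star_eq]
  · have h2 := hP.2 x
    simp only [ContinuousLinearMap.reApplyInnerSelf, ContinuousLinearMap.smul_apply] at *
    rw [show c • P x = (c:ℂ) • P x from (Complex.coe_smul c (P x)).symm, inner_smul_left]
    simp only [Complex.conj_ofReal]
    have e : RCLike.re ((c:ℂ) * (inner ℂ (P x) x : ℂ)) = c * RCLike.re (inner ℂ (P x) x : ℂ) := by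
      simp
    rw [e]
    exact mul_nonneg hc h2

lemma reAddIm (T : H →L[ℂ] H) : reOp T + imOp T
    = ((1 - Complex.I)/2) • T + ((1 + Complex.I)/2) • (adjoint T) := by
  rw [reOp, imOp, show ((2:ℝ)⁻¹ • (T + adjoint T)) = ((2:ℂ)⁻¹) • (T + adjoint T) by
    rw [← Complex.coe_smul]; norm_num]
  have h2I : ((2 * Complex.I)⁻¹ : ℂ) = - Complex.I / 2 := by
    field_simp [Complex.I_ne_zero]
    ring_nf
    simp [Complex.I_sq]
  rw [h2I]
  match_scalars <;> ring

lemma reSubIm (T : H →L[ℂ] H) : reOp T - imOp T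
    = ((1 + Complex.I)/2) • T + ((1 - Complex.I)/2) • (adjoint T) := by
  rw [reOp, imOp, show ((2:ℝ)⁻¹ • (T + adjoint T)) = ((2:ℂ)⁻¹) • (T + adjoint T) by
    rw [← Complex.coe_smul]; norm_num]
  have h2I : ((2 * Complex.I)⁻¹ : ℂ) = - Complex.I / 2 := by
    field_simp [Complex.I_ne_zero]
    ring_nf
    simp [Complex.I_sq]
  rw [h2I]
  match_scalars <;> ring

lemma sum_sq (T : H →L[ℂ] H) :
    (reOp T + imOp T) * (reOp T + imOp T) + (reOp T - imOp T) * (reOp T - imOp T)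
      = adjoint T * T + T * adjoint T := by
  rw [reAddIm, reSubIm]
  simp only [add_mul, mul_add, smul_mul_assoc, mul_smul_comm, smul_smul]
  match_scalars <;> (ring_nf <;> simp [Complex.ext_iff]) <;> ring_nf

lemma star_half_sub_I : (star ((1 - Complex.I)/2) : ℂ) = (1 + Complex.I)/2 := by
  simp [Complex.ext_iff]

lemma star_half_add_I : (star ((1 + Complex.I)/2) : ℂ) = (1 - Complex.I)/2 := by
  simp [Complex.ext_iff]

lemma sa_plus (T : H →L[ℂ] H) : IsSelfAdjoint (reOp T + imOp T) := by
  rw [IsSelfAdjoint, reAddIm]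
  simp only [star_add, star_smul, ContinuousLinearMap.star_eq_adjoint, adjoint_adjoint,
    star_half_sub_I, star_half_add_I]
  abel

lemma sa_minus (T : H →L[ℂ] H) : IsSelfAdjoint (reOp T - imOp T) := by
  rw [IsSelfAdjoint, reSubIm]
  simp only [star_add, star_smul, ContinuousLinearMap.star_eq_adjoint, adjoint_adjoint,
    star_half_sub_I, star_half_add_I]
  abel

/-- key self-adjoint norm bound -/
lemma norm_op_le (S : H →L[ℂ] H) (hS : IsSelfAdjoint S) {C : ℝ} (hC : 0 ≤ C)
    (h : ∀ x : H, |(inner ℂ (S x) x : ℂ).re| ≤ C * ‖x‖ ^ 2) : ‖S‖ ≤ C := by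
  refine S.opNorm_le_bound hC fun x => ?_
  rcases eq_or_ne (S x) 0 with h0 | h0
  · rw [h0, norm_zero]; positivity
  have hxpos : 0 < ‖x‖ := by
    rcases eq_or_ne x 0 with hx | hx
    · exact absurd (by simp [hx]) h0
    · exact norm_pos_iff.mpr hx
  have hSxpos : 0 < ‖S x‖ := norm_pos_iff.mpr h0
  set r : ℝ := ‖x‖ / ‖S x‖ with hr
  have hrpos : 0 < r := div_pos hxpos hSxpos
  set y : H := r • S x with hy
  have hyn : ‖y‖ = ‖x‖ := by
    rw [hy, norm_smul, Real.norm_of_nonneg hrpos.le, hr, div_mul_cancel₀ _ hSxpos.ne']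
  have hSadj : adjoint S = S := hS
  have hsym : (inner ℂ (S y) x : ℂ) = starRingEnd ℂ (inner ℂ (S x) y) := by
    rw [← hSadj, ContinuousLinearMap.adjoint_inner_left, hSadj, inner_conj_symm]
  have e : (inner ℂ (S (x+y)) (x+y) : ℂ) - inner ℂ (S (x-y)) (x-y)
      = 2 * (inner ℂ (S x) y : ℂ) + 2 * (inner ℂ (S y) x : ℂ) := by
    simp only [map_add, map_sub, inner_add_left, inner_add_right, inner_sub_left,
      inner_sub_right]
    ring
  have hId : (inner ℂ (S (x+y)) (x+y) : ℂ).re - (inner ℂ (S (x-y)) (x-y) : ℂ).re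
      = 4 * (inner ℂ (S x) y : ℂ).re := by
    have := congrArg Complex.re e
    rw [Complex.sub_re] at this
    rw [this, hsym]
    simp [Complex.add_re, Complex.mul_re]
    rw [← inner_conj_symm (S x) y, Complex.conj_re]
    ring
  have hpar : ‖x+y‖^2 + ‖x-y‖^2 = 2*(‖x‖^2 + ‖y‖^2) := by
    have := parallelogram_law_with_norm ℂ x y
    nlinarith [this]
  have h4 : 4 * (inner ℂ (S x) y : ℂ).re ≤ 4 * (C * ‖x‖^2) := by
    have a1 := (abs_le.mp (h (x+y))).2
    have a2 := (abs_le.mp (h (x-y))).1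
    rw [← hId]
    rw [hyn] at hpar
    nlinarith [a1, a2]
  have hin : (inner ℂ (S x) y : ℂ).re = r * ‖S x‖^2 := by
    rw [hy, show r • S x = (r:ℂ) • S x from (Complex.coe_smul r (S x)).symm,
      inner_smul_right]
    rw [Complex.re_ofReal_mul]
    congr 1
    exact inner_self_eq_norm_sq (𝕜 := ℂ) (S x)
  have hfin : ‖x‖ * ‖S x‖ ≤ C * ‖x‖^2 := by
    have : r * ‖S x‖^2 = ‖x‖ * ‖S x‖ := by
      rw [hr]; field_simp
    nlinarith [h4, hin]
  have : ‖x‖ * ‖S x‖ ≤ ‖x‖ * (C * ‖x‖) := by nlinarith [hfin]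
  exact le_of_mul_le_mul_left this hxpos

lemma numRad_nonneg (T : H →L[ℂ] H) : 0 ≤ numRad T :=
  Real.sSup_nonneg (by rintro r ⟨x, hx, rfl⟩; positivity)

lemma numRad_bdd (T : H →L[ℂ] H) :
    BddAbove {r : ℝ | ∃ x : H, ‖x‖ = 1 ∧ r = ‖(inner ℂ (T x) x : ℂ)‖} := by
  refine ⟨‖T‖, ?_⟩
  rintro r ⟨x, hx, rfl⟩
  calc ‖(inner ℂ (T x) x : ℂ)‖ = ‖(inner ℂ (T x) x : ℂ)‖ := rfl
    _ ≤ ‖T x‖ * ‖x‖ := norm_inner_le_norm _ _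
    _ ≤ ‖T‖ * ‖x‖ * ‖x‖ := by
        have := T.le_opNorm x
        nlinarith [norm_nonneg x]
    _ = ‖T‖ := by rw [hx]; ring

lemma abs_inner_le_numRad (T : H →L[ℂ] H) (x : H) :
    ‖(inner ℂ (T x) x : ℂ)‖ ≤ numRad T * ‖x‖^2 := by
  rcases eq_or_ne x 0 with hx | hx
  · simp [hx]
  have hxpos : 0 < ‖x‖ := norm_pos_iff.mpr hx
  set u : H := ‖x‖⁻¹ • x with hu
  have hu1 : ‖u‖ = 1 := by
    rw [hu, norm_smul, Real.norm_of_nonneg (by positivity), inv_mul_cancel₀ hxpos.ne']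
  have hle : ‖(inner ℂ (T u) u : ℂ)‖ ≤ numRad T :=
    le_csSup (numRad_bdd T) ⟨u, hu1, rfl⟩
  have hInner : (inner ℂ (T u) u : ℂ) = ((‖x‖⁻¹ : ℂ) * (‖x‖⁻¹ : ℂ)) * inner ℂ (T x) x := by
    rw [hu, show (‖x‖⁻¹ : ℝ) • x = ((‖x‖⁻¹ : ℝ) : ℂ) • x from (Complex.coe_smul _ x).symm,
      map_smul, inner_smul_left, inner_smul_right, Complex.conj_ofReal]
    push_cast
    ring
  rw [hInner] at hle
  simp only [norm_mul, norm_inv, Complex.norm_real, norm_norm] at hle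
  have h2 : ‖x‖⁻¹ * ‖x‖⁻¹ * ‖(inner ℂ (T x) x : ℂ)‖ ≤ numRad T := hle
  have h3 : ‖x‖⁻¹ * ‖x‖ = 1 := inv_mul_cancel₀ hxpos.ne'
  have key : ‖(inner ℂ (T x) x : ℂ)‖
      = (‖x‖⁻¹ * ‖x‖⁻¹ * ‖(inner ℂ (T x) x : ℂ)‖) * ‖x‖^2 := by
    field_simp
  rw [key]
  exact mul_le_mul_of_nonneg_right h2 (sq_nonneg _)

lemma abs_half_one_I : ‖((1 - Complex.I)/2 : ℂ)‖ = Real.sqrt 2 / 2 ∧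
    ‖((1 + Complex.I)/2 : ℂ)‖ = Real.sqrt 2 / 2 := by
  constructor <;>
  · rw [norm_div]
    simp [Complex.norm_def, Complex.normSq_apply]
    rw [show (1:ℝ) + 1 = 2 by norm_num]

lemma norm_plus_le (T : H →L[ℂ] H) : ‖reOp T + imOp T‖ ≤ Real.sqrt 2 * numRad T := by
  apply norm_op_le _ (sa_plus T) (mul_nonneg (Real.sqrt_nonneg 2) (numRad_nonneg T))
  intro x
  have hw : (inner ℂ ((reOp T + imOp T) x) x : ℂ)
      = (starRingEnd ℂ ((1 - Complex.I)/2)) * (inner ℂ (T x) x : ℂ)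
        + (starRingEnd ℂ ((1 + Complex.I)/2)) * (starRingEnd ℂ (inner ℂ (T x) x : ℂ)) := by
    rw [reAddIm]
    simp only [ContinuousLinearMap.add_apply, ContinuousLinearMap.smul_apply, inner_add_left,
      inner_smul_left]
    rw [ContinuousLinearMap.adjoint_inner_left, ← inner_conj_symm (T x) x]
    simp
  calc |(inner ℂ ((reOp T + imOp T) x) x : ℂ).re| ≤ ‖(inner ℂ ((reOp T + imOp T) x) x : ℂ)‖ :=
        Complex.abs_re_le_norm _
    _ ≤ Real.sqrt 2 * ‖(inner ℂ (T x) x : ℂ)‖ := by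
        rw [hw]
        refine le_trans (norm_add_le _ _) ?_
        rw [norm_mul, norm_mul, Complex.norm_conj, Complex.norm_conj, Complex.norm_conj,
          (abs_half_one_I).1, (abs_half_one_I).2]
        exact le_of_eq (by ring)
    _ ≤ Real.sqrt 2 * (numRad T * ‖x‖^2) :=
        mul_le_mul_of_nonneg_left (abs_inner_le_numRad T x) (Real.sqrt_nonneg 2)
    _ = (Real.sqrt 2 * numRad T) * ‖x‖^2 := by ring

lemma norm_minus_le (T : H →L[ℂ] H) : ‖reOp T - imOp T‖ ≤ Real.sqrt 2 * numRad T := by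
  apply norm_op_le _ (sa_minus T) (mul_nonneg (Real.sqrt_nonneg 2) (numRad_nonneg T))
  intro x
  have hw : (inner ℂ ((reOp T - imOp T) x) x : ℂ)
      = (starRingEnd ℂ ((1 + Complex.I)/2)) * (inner ℂ (T x) x : ℂ)
        + (starRingEnd ℂ ((1 - Complex.I)/2)) * (starRingEnd ℂ (inner ℂ (T x) x : ℂ)) := by
    rw [reSubIm]
    simp only [ContinuousLinearMap.add_apply, ContinuousLinearMap.smul_apply, inner_add_left,
      inner_smul_left]
    rw [ContinuousLinearMap.adjoint_inner_left, ← inner_conj_symm (T x) x]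
    simp
  calc |(inner ℂ ((reOp T - imOp T) x) x : ℂ).re| ≤ ‖(inner ℂ ((reOp T - imOp T) x) x : ℂ)‖ :=
        Complex.abs_re_le_norm _
    _ ≤ Real.sqrt 2 * ‖(inner ℂ (T x) x : ℂ)‖ := by
        rw [hw]
        refine le_trans (norm_add_le _ _) ?_
        rw [norm_mul, norm_mul, Complex.norm_conj, Complex.norm_conj, Complex.norm_conj,
          (abs_half_one_I).1, (abs_half_one_I).2]
        exact le_of_eq (by ring)
    _ ≤ Real.sqrt 2 * (numRad T * ‖x‖^2) :=
        mul_le_mul_of_nonneg_left (abs_inner_le_numRad T x) (Real.sqrt_nonneg 2)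
    _ = (Real.sqrt 2 * numRad T) * ‖x‖^2 := by ring

set_option maxHeartbeats 1000000 in
set_option synthInstance.maxHeartbeats 400000 in
theorem numRad_sq_ge_of_alphaBetaNormal' (T : H →L[ℂ] H) (α β : ℝ)
    (hα0 : 0 ≤ α) (hα1 : α ≤ 1) (hβ : 1 ≤ β)
    (h1 : (α^2 : ℝ) • (ContinuousLinearMap.adjoint T * T) ≤ T * ContinuousLinearMap.adjoint T)
    (h2 : T * ContinuousLinearMap.adjoint T ≤ (β^2 : ℝ) • (ContinuousLinearMap.adjoint T * T)) :
    (numRad T)^2 ≥ max (1 + α^2) (1 + 1/β^2) * ‖T‖^2 / 4 +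
      |‖reOp T + imOp T‖^2 - ‖reOp T - imOp T‖^2| / 4 := by
  have hβpos : (0:ℝ) < β := lt_of_lt_of_le one_pos hβ
  set w := numRad T with hwdef
  have hw0 : 0 ≤ w := numRad_nonneg T
  set u := ‖reOp T + imOp T‖ with hudef
  set v := ‖reOp T - imOp T‖ with hvdef
  -- squares bounds
  have hu : u^2 ≤ 2 * w^2 := by
    have h := norm_plus_le T
    nlinarith [norm_nonneg (reOp T + imOp T), Real.sq_sqrt (by norm_num : (0:ℝ) ≤ 2),
      Real.sqrt_nonneg 2, hw0]
  have hv : v^2 ≤ 2 * w^2 := by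
    have h := norm_minus_le T
    nlinarith [norm_nonneg (reOp T - imOp T), Real.sq_sqrt (by norm_num : (0:ℝ) ≤ 2),
      Real.sqrt_nonneg 2, hw0]
  -- norms of products
  have hTT : ‖ContinuousLinearMap.adjoint T * T‖ = ‖T‖^2 := by
    rw [← ContinuousLinearMap.star_eq_adjoint, CStarRing.norm_star_mul_self, sq]
  have hTT' : ‖T * ContinuousLinearMap.adjoint T‖ = ‖T‖^2 := by
    rw [← ContinuousLinearMap.star_eq_adjoint, CStarRing.norm_self_mul_star, sq]
  have hpos1 : (0:H →L[ℂ] H) ≤ ContinuousLinearMap.adjoint T * T := by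
    rw [← ContinuousLinearMap.star_eq_adjoint]; exact star_mul_self_nonneg T
  have hpos2 : (0:H →L[ℂ] H) ≤ T * ContinuousLinearMap.adjoint T := by
    rw [← ContinuousLinearMap.star_eq_adjoint]; exact mul_star_self_nonneg T
  set N := ‖ContinuousLinearMap.adjoint T * T + T * ContinuousLinearMap.adjoint T‖ with hNdef
  -- N ≤ u^2 + v^2
  have hNle : N ≤ u^2 + v^2 := by
    have e := sum_sq T
    have n1 : ‖(reOp T + imOp T) * (reOp T + imOp T)‖ = u^2 := by
      conv_lhs => rw [show (reOp T + imOp T) * (reOp T + imOp T)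
        = star (reOp T + imOp T) * (reOp T + imOp T) by rw [(sa_plus T).star_eq]]
      rw [CStarRing.norm_star_mul_self, sq]
    have n2 : ‖(reOp T - imOp T) * (reOp T - imOp T)‖ = v^2 := by
      conv_lhs => rw [show (reOp T - imOp T) * (reOp T - imOp T)
        = star (reOp T - imOp T) * (reOp T - imOp T) by rw [(sa_minus T).star_eq]]
      rw [CStarRing.norm_star_mul_self, sq]
    calc N = ‖(reOp T + imOp T) * (reOp T + imOp T)
          + (reOp T - imOp T) * (reOp T - imOp T)‖ := by rw [hNdef, e]
      _ ≤ ‖(reOp T + imOp T) * (reOp T + imOp T)‖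
          + ‖(reOp T - imOp T) * (reOp T - imOp T)‖ := norm_add_le _ _
      _ = u^2 + v^2 := by rw [n1, n2]
  -- lower bounds on N
  have hM1 : (1 + α^2) * ‖T‖^2 ≤ N := by
    have hle : (1 + α^2) • (ContinuousLinearMap.adjoint T * T)
        ≤ ContinuousLinearMap.adjoint T * T + T * ContinuousLinearMap.adjoint T := by
      rw [add_smul, one_smul]
      exact add_le_add_right h1 _
    have hp : (0:H →L[ℂ] H) ≤ (1 + α^2) • (ContinuousLinearMap.adjoint T * T) :=
      my_smul_nonneg_op _ (by positivity) hpos1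
    have := CStarAlgebra.norm_le_norm_of_nonneg_of_le hp hle
    rwa [norm_smul, Real.norm_of_nonneg (by positivity), hTT] at this
  have hM2 : (1 + 1/β^2) * ‖T‖^2 ≤ N := by
    have hb : (1/β^2) • (T * ContinuousLinearMap.adjoint T)
        ≤ ContinuousLinearMap.adjoint T * T := by
      have h0 : (0:H →L[ℂ] H) ≤ (β^2 : ℝ) • (ContinuousLinearMap.adjoint T * T)
          - T * ContinuousLinearMap.adjoint T := sub_nonneg.2 h2
      have hsm := my_smul_nonneg_op (1/β^2) (by positivity) h0
      rw [smul_sub, smul_smul, show (1/β^2) * β^2 = 1 by field_simp, one_smul] at hsm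
      exact sub_nonneg.1 hsm
    have hle : (1 + 1/β^2) • (T * ContinuousLinearMap.adjoint T)
        ≤ ContinuousLinearMap.adjoint T * T + T * ContinuousLinearMap.adjoint T := by
      rw [add_smul, one_smul, add_comm (ContinuousLinearMap.adjoint T * T)]
      exact add_le_add_right hb _
    have hp : (0:H →L[ℂ] H) ≤ (1 + 1/β^2) • (T * ContinuousLinearMap.adjoint T) :=
      my_smul_nonneg_op _ (by positivity) hpos2
    have := CStarAlgebra.norm_le_norm_of_nonneg_of_le hp hle
    rwa [norm_smul, Real.norm_of_nonneg (by positivity), hTT'] at this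
  -- combine
  have hmax : max (1 + α^2) (1 + 1/β^2) * ‖T‖^2 ≤ u^2 + v^2 := by
    rw [max_mul_of_nonneg _ _ (sq_nonneg ‖T‖)]
    exact max_le (hM1.trans hNle) (hM2.trans hNle)
  rw [ge_iff_le]
  rcases abs_cases (u^2 - v^2) with ⟨habs, _⟩ | ⟨habs, _⟩ <;> rw [habs] <;> linarith
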